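/- In the Recursive Walk, the flaws labeling the roots of the recursion forest (one root per invocation of ADDRESS by the top-level procedure ELIMINATE) are pairwise distinct and pairwise non-adjacent in the undirected graph G(R) where {f,g} is an edge iff both f→g and g→f are arcs of R; the same holds for the flaws labeling the children of any vertex of the forest. -/
import Mathlib


universe u v

mutual
  /-- `RecAddr f A Γ i σ τ` models an invocation `ADDRESS(i,σ)` of the Recursive Walk that
  returns at state `τ`. -/
  inductive RecAddr {ι : Type u} {Ω : Type v} [LinearOrder ι]
      (f : ι → Set Ω) (A : ι → Ω → Set Ω) (Γ : ι → Set ι) : ι → Ω → Ω → Prop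
    | step {i : ι} {σ τ₀ τ : Ω} : σ ∈ f i → τ₀ ∈ A i σ →
        RecLoop f A Γ i τ₀ τ → RecAddr f A Γ i σ τ
  /-- The while-loop of `ADDRESS(i,·)`. -/
  inductive RecLoop {ι : Type u} {Ω : Type v} [LinearOrder ι]
      (f : ι → Set Ω) (A : ι → Ω → Set Ω) (Γ : ι → Set ι) : ι → Ω → Ω → Prop
    | done {i : ι} {σ : Ω} : (∀ j, σ ∈ f j → j ∉ Γ i) → RecLoop f A Γ i σ σ
    | more {i j : ι} {σ σ' τ : Ω} : σ ∈ f j → j ∈ Γ i →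
        (∀ k, σ ∈ f k → k ∈ Γ i → k ≤ j) →
        RecAddr f A Γ j σ σ' → RecLoop f A Γ i σ' τ → RecLoop f A Γ i σ τ
end

theorem keyA {ι : Type u} {Ω : Type v} [LinearOrder ι]
    {f : ι → Set Ω} {A : ι → Ω → Set Ω} {Γ : ι → Set ι}
    (hC : ∀ i σ τ, σ ∈ f i → τ ∈ A i σ → ∀ j, τ ∈ f j → (j = i ∨ σ ∉ f j) → j ∈ Γ i)
    {i : ι} {σ τ : Ω} (h : RecAddr f A Γ i σ τ) :
    ∀ j, τ ∈ f j → σ ∈ f j ∧ j ∉ Γ i ∧ j ≠ i := by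
  refine RecAddr.rec
    (motive_1 := fun i σ τ _ => ∀ j, τ ∈ f j → σ ∈ f j ∧ j ∉ Γ i ∧ j ≠ i)
    (motive_2 := fun i σ τ _ => ∀ j, τ ∈ f j → σ ∈ f j ∧ j ∉ Γ i)
    ?_ ?_ ?_ h
  · intro i σ τ₀ τ hσ hτ₀ _ ih j hj
    obtain ⟨hjτ₀, hjΓ⟩ := ih j hj
    refine ⟨?_, hjΓ, ?_⟩
    · by_contra hns
      exact hjΓ (hC _ _ _ hσ hτ₀ j hjτ₀ (Or.inr hns))
    · rintro rfl
      exact hjΓ (hC _ _ _ hσ hτ₀ j hjτ₀ (Or.inl rfl))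
  · intro i σ hdone j hj
    exact ⟨hj, hdone j hj⟩
  · intro i j₀ σ σ' τ _ _ _ _ _ ihA ihL j hj
    obtain ⟨hσ'j, hjΓi⟩ := ihL j hj
    obtain ⟨hσj', _, _⟩ := ihA j hσ'j
    exact ⟨hσj', hjΓi⟩

/-- In the Recursive Walk, the flaws labeling the roots of the recursion forest (the
successive invocations of ADDRESS made by ELIMINATE, each on the greatest present flaw)
are pairwise distinct and pairwise non-adjacent in the undirected graph `G(R)`, where
`{f,g}` is an edge iff both `f → g` and `g → f` are arcs of `R`; and the same holds for
the flaws labeling the children of any vertex, i.e. for the successive recursive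
invocations made inside `ADDRESS(i,·)` (each on the greatest present flaw of `Γ i`). -/
theorem stmt_12 {ι : Type u} {Ω : Type v} [LinearOrder ι]
    (f : ι → Set Ω) (A : ι → Ω → Set Ω) (Γ : ι → Set ι)
    (hC : ∀ i σ τ, σ ∈ f i → τ ∈ A i σ → ∀ j, τ ∈ f j → (j = i ∨ σ ∉ f j) → j ∈ Γ i)
    (n : ℕ) (σ : ℕ → Ω) (idx : ℕ → ι) :
    ((∀ k < n, σ k ∈ f (idx k) ∧ (∀ j, σ k ∈ f j → j ≤ idx k) ∧
        RecAddr f A Γ (idx k) (σ k) (σ (k + 1))) →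
      ∀ k l, k < l → l < n →
        idx k ≠ idx l ∧ ¬(idx k ∈ Γ (idx l) ∧ idx l ∈ Γ (idx k))) ∧
    (∀ i : ι, (∀ k < n, σ k ∈ f (idx k) ∧ idx k ∈ Γ i ∧
        (∀ j, σ k ∈ f j → j ∈ Γ i → j ≤ idx k) ∧
        RecAddr f A Γ (idx k) (σ k) (σ (k + 1))) →
      ∀ k l, k < l → l < n →
        idx k ≠ idx l ∧ ¬(idx k ∈ Γ (idx l) ∧ idx l ∈ Γ (idx k))) := by
  -- chain lemma: flaws only shrink along the sequence
  have chain : (∀ k < n, RecAddr f A Γ (idx k) (σ k) (σ (k + 1))) →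
      ∀ m l, m ≤ l → l ≤ n → ∀ j, σ l ∈ f j → σ m ∈ f j := by
    intro hsteps m l hml hln j
    induction l with
    | zero => simp [Nat.le_zero.mp hml]
    | succ l ih =>
      intro hj
      rcases Nat.lt_or_ge m (l + 1) with hm | hm
      · have hstep := hsteps l (lt_of_lt_of_le (Nat.lt_succ_self l) hln)
        have := (keyA hC hstep j hj).1
        exact ih (Nat.lt_succ_iff.mp hm) (le_of_lt hln) this
      · have : m = l + 1 := le_antisymm hml hm
        simpa [this]
  have main : (∀ k < n, RecAddr f A Γ (idx k) (σ k) (σ (k + 1))) →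
      (∀ k < n, σ k ∈ f (idx k)) →
      ∀ k l, k < l → l < n →
        idx k ≠ idx l ∧ ¬(idx k ∈ Γ (idx l) ∧ idx l ∈ Γ (idx k)) := by
    intro hsteps hmem k l hkl hln
    have hσl : σ l ∈ f (idx l) := hmem l hln
    have hσk1 : σ (k + 1) ∈ f (idx l) :=
      chain hsteps (k + 1) l hkl (le_of_lt hln) _ hσl
    obtain ⟨_, hnΓ, hne⟩ := keyA hC (hsteps k (lt_trans hkl hln)) _ hσk1
    exact ⟨fun h => hne h.symm, fun h => hnΓ h.2⟩
  constructor
  · intro H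
    exact main (fun k hk => (H k hk).2.2) (fun k hk => (H k hk).1)
  · intro i H
    exact main (fun k hk => (H k hk).2.2.2) (fun k hk => (H k hk).1)
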